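/- Let a > 0 and consider the recurrence x(n+1) = x(n) − a·x(n-1) for n ≥ 1. If a ≤ 1, then for any initial values x(0), x(1) there exists M (depending only on x(0), x(1), a) such that |x(n)| ≤ M for all n; specifically, when a ≤ 1 all solutions are bounded. -/
import Mathlib


theorem stmt_4 (a : ℝ) (ha : 0 < a) (ha1 : a ≤ 1) (x : ℕ → ℝ)
    (hx : ∀ n, 1 ≤ n → x (n + 1) = x n - a * x (n - 1)) :
    ∃ M : ℝ, ∀ n, |x n| ≤ M := by
  have hx' : ∀ n : ℕ, x (n + 2) = x (n + 1) - a * x n := by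
    intro n
    have := hx (n + 1) (by omega)
    simpa using this
  rcases le_or_gt a (1/4) with hc | hc
  · -- real roots: s = (1-√(1-4a))/2 is a root, contraction argument
    set d := Real.sqrt (1 - 4 * a) with hd
    have hd0 : 0 ≤ d := Real.sqrt_nonneg _
    have hdsq : d ^ 2 = 1 - 4 * a := by
      rw [hd, sq, Real.mul_self_sqrt (by linarith)]
    have hd1 : d ≤ 1 := by
      nlinarith [hdsq, hd0]
    set s := (1 - d) / 2 with hs
    set r := (1 + d) / 2 with hr
    have hrs : r * s = a := by rw [hr, hs]; nlinarith [hdsq]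
    have hsum : r + s = 1 := by rw [hr, hs]; ring
    have hs0 : 0 ≤ s := by rw [hs]; linarith
    have hshalf : s ≤ 1/2 := by rw [hs]; linarith
    have hr0 : 0 ≤ r := by rw [hr]; linarith
    have hr1 : r ≤ 1 := by rw [hr]; linarith
    set y : ℕ → ℝ := fun n => x (n + 1) - s * x n with hy
    have hyrec : ∀ n, y (n + 1) = r * y n := by
      intro n
      simp only [hy]
      rw [hx' n]
      have h1 : a = r * s := hrs.symm
      have h2 : (1 : ℝ) - s = r := by linarith
      linear_combination x (n + 1) * h2 - x n * h1
    have hyb : ∀ n, |y n| ≤ |y 0| := by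
      intro n
      induction n with
      | zero => exact le_refl _
      | succ k ih =>
        rw [hyrec k, abs_mul, abs_of_nonneg hr0]
        nlinarith [abs_nonneg (y k)]
    refine ⟨max (|x 0|) (2 * |y 0|), ?_⟩
    intro n
    induction n with
    | zero => exact le_max_left _ _
    | succ k ih =>
      have hxk : x (k + 1) = s * x k + y k := by simp only [hy]; ring
      have h1 : |x (k + 1)| ≤ s * |x k| + |y k| := by
        rw [hxk]
        calc |s * x k + y k| ≤ |s * x k| + |y k| := abs_add_le _ _
          _ = s * |x k| + |y k| := by rw [abs_mul, abs_of_nonneg hs0]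
      have h2 := hyb k
      have hM0 : 0 ≤ max (|x 0|) (2 * |y 0|) := le_trans (abs_nonneg _) (le_max_left _ _)
      have h3 : 2 * |y 0| ≤ max (|x 0|) (2 * |y 0|) := le_max_right _ _
      nlinarith [abs_nonneg (x k)]
  · -- complex roots: Lyapunov function E n = x(n+1)² - x(n+1)x n + a x n²
    set E : ℕ → ℝ := fun n => x (n + 1) ^ 2 - x (n + 1) * x n + a * x n ^ 2 with hE
    have hErec : ∀ n, E (n + 1) = a * E n := by
      intro n
      simp only [hE]
      rw [hx' n]
      ring
    have hE0 : ∀ n, 0 ≤ E n := by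
      intro n
      simp only [hE]
      nlinarith [sq_nonneg (x (n + 1) - x n / 2), sq_nonneg (x n)]
    have hEmono : ∀ n, E n ≤ E 0 := by
      intro n
      induction n with
      | zero => exact le_refl _
      | succ k ih =>
        rw [hErec k]
        nlinarith [hE0 k]
    refine ⟨max (|x 0|) (Real.sqrt (a * E 0 / (a - 1/4))), ?_⟩
    intro n
    cases n with
    | zero => exact le_max_left _ _
    | succ k =>
      have h1 : (a - 1/4) * x (k + 1) ^ 2 ≤ a * E k := by
        simp only [hE]
        nlinarith [sq_nonneg (x (k + 1) / 2 - a * x k)]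
      have h2 : x (k + 1) ^ 2 ≤ a * E 0 / (a - 1/4) := by
        rw [le_div_iff₀ (by linarith)]
        have h4 := mul_le_mul_of_nonneg_left (hEmono k) (le_of_lt ha)
        calc x (k + 1) ^ 2 * (a - 1/4) = (a - 1/4) * x (k + 1) ^ 2 := by ring
          _ ≤ a * E k := h1
          _ ≤ a * E 0 := h4
      have h3 : |x (k + 1)| ≤ Real.sqrt (a * E 0 / (a - 1/4)) := by
        rw [← Real.sqrt_sq_eq_abs]
        exact Real.sqrt_le_sqrt h2
      exact le_trans h3 (le_max_right _ _)
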